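/- With a_k, b_k, c_k as defined from the recurrence sequence x_k (extremal-number setup with matrix M = [[a,1],[-1,0]]), the determinant of the 3×3 matrix with rows x_{k-1}, x_k, x_{k+1} (each viewed as a vector in ℤ³) equals 2·ε_{k+1}·(-1)^{k+1}, i.e. det(x_{k-1}, x_k, x_{k+1}) = a_k·x_{k-1,2} + b_k·x_{k-1,1} + c_k·x_{k-1,0} = 2·ε_{k+1}·(-1)^{k+1}. -/
import Mathlib


/-- The matrix `S_k = A + (-1)^k J` with `A = [[a,0],[0,0]]`, `J = [[0,1],[-1,0]]`. -/
def Smat (a : ℤ) (k : ℕ) : Matrix (Fin 2) (Fin 2) ℤ :=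
  !![a, 0; 0, 0] + ((-1 : ℤ) ^ k) • !![0, 1; -1, 0]

open Matrix in
theorem stmt_14 (a : ℤ) (ha : 0 < a)
    (x : ℕ → Matrix (Fin 2) (Fin 2) ℤ)
    (hsym : ∀ k, (x k)ᵀ = x k)
    (hunit : ∀ k, IsUnit (x k).det)
    (hrec : ∀ k, x (k + 2) = x (k + 1) * Smat a (k + 1) * x k) :
    ∀ k,
      let ak := x (k + 1) 0 0 * x (k + 2) 0 1 - x (k + 1) 0 1 * x (k + 2) 0 0
      let bk := -(x (k + 1) 0 0 * x (k + 2) 1 1 - x (k + 1) 1 1 * x (k + 2) 0 0)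
      let ck := x (k + 1) 0 1 * x (k + 2) 1 1 - x (k + 1) 1 1 * x (k + 2) 0 1
      (!![x k 0 0, x k 0 1, x k 1 1;
          x (k + 1) 0 0, x (k + 1) 0 1, x (k + 1) 1 1;
          x (k + 2) 0 0, x (k + 2) 0 1, x (k + 2) 1 1] : Matrix (Fin 3) (Fin 3) ℤ).det =
        ak * x k 1 1 + bk * x k 0 1 + ck * x k 0 0 ∧
      ak * x k 1 1 + bk * x k 0 1 + ck * x k 0 0 =
        2 * (x (k + 2)).det * (-1 : ℤ) ^ k := by
  intro k
  have hp : x k 1 0 = x k 0 1 := by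
    conv_lhs => rw [← hsym k]
    simp
  have hq : x (k + 1) 1 0 = x (k + 1) 0 1 := by
    conv_lhs => rw [← hsym (k + 1)]
    simp
  have hk1 : (-1 : ℤ) ^ (k + 1) = -(-1 : ℤ) ^ k := by ring
  have hR : (x (k + 1) * Smat a (k + 1) * x k) 0 1
      = (x (k + 1) * Smat a (k + 1) * x k) 1 0 := by
    rw [← hrec k]
    conv_lhs => rw [← hsym (k + 2)]
    simp
  constructor
  · rw [Matrix.det_fin_three]
    simp [Matrix.mul_apply]
    ring
  · rw [hrec k]
    rcases neg_one_pow_eq_or ℤ k with h | h <;>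
      simp [Smat, Matrix.mul_apply, Matrix.det_fin_two, Fin.sum_univ_succ,
        hk1, h, hp, hq] at hR ⊢ <;>
      linear_combination (x k 1 1 * x (k + 1) 0 0 - x k 0 1 * x (k + 1) 0 1) * hR
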